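/- arXiv:2303.14113 — 2 statements merged into one kernel-verified Lean document; each statement's English description precedes it below -/
import Mathlib

section
/- Suppose γ : [θ̲, θ̄] → ℝ is integrable and monotone nondecreasing, and the payment rule is r(θ) = ∫_{θ̲}^{θ} γ(y) dy − θγ(θ) − V(θ). Then the mechanism is incentive compatible: for all θ, θ̂ ∈ [θ̲, θ̄], V(θ) + θγ(θ) + r(θ) ≥ V(θ̂) + θγ(θ̂) + r(θ̂). -/
/-- with the payment rule r(θ) = ∫_{θ̲}^{θ} γ − θγ(θ) − V(θ) and γ
monotone nondecreasing and integrable, the mechanism is incentive compatible. -/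
theorem stmt_3 (θl θh : ℝ) (hle : θl ≤ θh) (V γ r : ℝ → ℝ)
    (hmono : MonotoneOn γ (Set.Icc θl θh))
    (hint : IntervalIntegrable γ MeasureTheory.volume θl θh)
    (hr : ∀ θ ∈ Set.Icc θl θh, r θ = (∫ y in θl..θ, γ y) - θ * γ θ - V θ) :
    ∀ θ ∈ Set.Icc θl θh, ∀ θ' ∈ Set.Icc θl θh,
      V θ' + θ * γ θ' + r θ' ≤ V θ + θ * γ θ + r θ := by
  have hsubint : ∀ a ∈ Set.Icc θl θh, ∀ b ∈ Set.Icc θl θh,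
      IntervalIntegrable γ MeasureTheory.volume a b := by
    intro a ha b hb
    refine hint.mono_set ?_
    rw [Set.uIcc_of_le hle]
    exact Set.uIcc_subset_Icc ha hb
  have key : ∀ a ∈ Set.Icc θl θh, ∀ b ∈ Set.Icc θl θh, a ≤ b →
      (b - a) * γ a ≤ (∫ y in a..b, γ y) ∧ (∫ y in a..b, γ y) ≤ (b - a) * γ b := by
    intro a ha b hb hab
    have hintab := hsubint a ha b hb
    have hmem : ∀ x ∈ Set.Icc a b, x ∈ Set.Icc θl θh := fun x hx =>
      ⟨le_trans ha.1 hx.1, le_trans hx.2 hb.2⟩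
    constructor
    · have h := intervalIntegral.integral_mono_on hab
        (intervalIntegrable_const (c := γ a)) hintab
        (fun x hx => hmono ha (hmem x hx) hx.1)
      simpa [smul_eq_mul, mul_comm] using h
    · have h := intervalIntegral.integral_mono_on hab hintab
        (intervalIntegrable_const (c := γ b))
        (fun x hx => hmono (hmem x hx) hb hx.2)
      simpa [smul_eq_mul, mul_comm] using h
  intro θ hθ θ' hθ'
  rw [hr θ hθ, hr θ' hθ']
  have hsplit : (∫ y in θl..θ', γ y) + (∫ y in θ'..θ, γ y) = ∫ y in θl..θ, γ y :=
    intervalIntegral.integral_add_adjacent_intervals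
      (hsubint θl (Set.left_mem_Icc.2 hle) θ' hθ') (hsubint θ' hθ' θ hθ)
  have hkey2 : (θ - θ') * γ θ' ≤ ∫ y in θ'..θ, γ y := by
    rcases le_total θ' θ with h | h
    · exact (key θ' hθ' θ hθ h).1
    · have h2 := (key θ hθ θ' hθ' h).2
      have h3 : (∫ y in θ..θ', γ y) = -∫ y in θ'..θ, γ y :=
        intervalIntegral.integral_symm θ' θ
      linarith [h2, h3, (by ring : (θ - θ') * γ θ' = -((θ' - θ) * γ θ'))]
  linarith [hsplit, hkey2, (by ring : (θ - θ') * γ θ' = θ * γ θ' - θ' * γ θ')]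
end

section
/- Let x(θ) = (s+a−p)[(t+b)I_N − (M_φ(θ)G + Gᵀ M_φ(θ))]⁻¹ 𝟙 with s + a > p, g_{ij} ≥ 0, φ nondecreasing with values in [0, θ̄], and t + b > θ̄ max_i Σ_j (g_{ij} + g_{ji}). Then each coordinate x_j(θ) is nonnegative and nondecreasing in each θ_i. -/
open Matrix

attribute [local instance] Matrix.linftyOpNormedRing Matrix.linftyOpNormedSpace

lemma key_invnn {N : ℕ} (c : ℝ) (hc : 0 < c) (C : Matrix (Fin N) (Fin N) ℝ)
    (hC : ∀ i j, 0 ≤ C i j) (hrow : ∀ i, ∑ j, C i j < c) :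
    IsUnit (c • (1 : Matrix (Fin N) (Fin N) ℝ) - C) ∧
      ∀ i j, 0 ≤ (c • (1 : Matrix (Fin N) (Fin N) ℝ) - C)⁻¹ i j := by
  rcases Nat.eq_zero_or_pos N with hN | hN
  · subst hN
    constructor
    · have : (c • (1 : Matrix (Fin 0) (Fin 0) ℝ) - C) = 1 := Subsingleton.elim _ _
      rw [this]; exact isUnit_one
    · intro i; exact i.elim0
  haveI : CompleteSpace (Matrix (Fin N) (Fin N) ℝ) := FiniteDimensional.complete ℝ _
  set B : Matrix (Fin N) (Fin N) ℝ := c⁻¹ • C with hBdef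
  have hB : ∀ i j, 0 ≤ B i j := fun i j => by
    simpa [hBdef] using mul_nonneg (inv_nonneg.2 hc.le) (hC i j)
  have hBrow : ∀ i, ∑ j, B i j < 1 := by
    intro i
    have : ∑ j, B i j = c⁻¹ * ∑ j, C i j := by
      simp [hBdef, Finset.mul_sum]
    rw [this]
    rw [inv_mul_lt_iff₀ hc, mul_one]
    exact hrow i
  have hnorm : ‖B‖ < 1 := by
    rw [Matrix.linfty_opNorm_def]
    have : ((Finset.univ : Finset (Fin N)).sup fun i => ∑ j, ‖B i j‖₊ : NNReal) < 1 := by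
      rw [Finset.sup_lt_iff (by norm_num)]
      intro i _
      have h1 : ((∑ j, ‖B i j‖₊ : NNReal) : ℝ) = ∑ j, B i j := by
        push_cast
        exact Finset.sum_congr rfl fun j _ => Real.norm_of_nonneg (hB i j)
      have : ((∑ j, ‖B i j‖₊ : NNReal) : ℝ) < 1 := h1 ▸ hBrow i
      exact_mod_cast this
    exact_mod_cast this
  -- powers of B are nonneg
  have hpow : ∀ (n : ℕ) i j, 0 ≤ (B ^ n) i j := by
    intro n
    induction n with
    | zero => intro i j; by_cases h : i = j <;> simp [h, Matrix.one_apply]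
    | succ n ih =>
      intro i j
      rw [pow_succ, Matrix.mul_apply]
      exact Finset.sum_nonneg fun k _ => mul_nonneg (ih i k) (hB k j)
  set S : Matrix (Fin N) (Fin N) ℝ := ∑' n : ℕ, B ^ n with hSdef
  have hmul : (1 - B) * S = 1 := (Units.oneSub B hnorm).val_inv
  have hAeq : c • (1 : Matrix (Fin N) (Fin N) ℝ) - C = c • ((1 : Matrix (Fin N) (Fin N) ℝ) - B) := by
    rw [smul_sub, hBdef, smul_smul, mul_inv_cancel₀ hc.ne', one_smul]
  have hright : (c • (1 : Matrix (Fin N) (Fin N) ℝ) - C) * (c⁻¹ • S) = 1 := by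
    rw [hAeq, smul_mul_assoc, mul_smul_comm, smul_smul, mul_inv_cancel₀ hc.ne', one_smul, hmul]
  refine ⟨(Matrix.isUnit_iff_isUnit_det _).2 (Matrix.isUnit_det_of_right_inverse hright), ?_⟩
  have hinv : (c • (1 : Matrix (Fin N) (Fin N) ℝ) - C)⁻¹ = c⁻¹ • S :=
    Matrix.inv_eq_right_inv hright
  have hsummable : Summable fun n : ℕ => B ^ n := summable_geometric_of_norm_lt_one hnorm
  have hSnn : ∀ i j, 0 ≤ S i j := by
    intro i j
    let g : Matrix (Fin N) (Fin N) ℝ →+ ℝ := AddMonoidHom.mk' (fun M => M i j) fun _ _ => rfl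
    have hcont : Continuous g := by
      have : IsLinearMap ℝ (g : Matrix (Fin N) (Fin N) ℝ → ℝ) :=
        ⟨fun _ _ => rfl, fun _ _ => rfl⟩
      exact (this.mk' _).continuous_of_finiteDimensional
    have hmap : HasSum (fun n : ℕ => (B ^ n) i j) (S i j) :=
      hsummable.hasSum.map g hcont
    exact hmap.nonneg fun n => hpow n i j
  intro i j
  rw [hinv]
  exact mul_nonneg (inv_nonneg.2 hc.le) (hSnn i j)

/-- the optimal demand x(θ) = (s+a−p)[(t+b)I − (M_φG + GᵀM_φ)]⁻¹𝟙
is coordinatewise nonnegative and nondecreasing in each type θ_i. -/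
theorem stmt_14 {N : ℕ} (s a p t b θbar : ℝ) (hsap : p < s + a) (hθ : 0 < θbar)
    (G : Matrix (Fin N) (Fin N) ℝ) (hG : ∀ i j, 0 ≤ G i j)
    (φ : ℝ → ℝ) (hφmono : Monotone φ) (hφrange : ∀ y, φ y ∈ Set.Icc 0 θbar)
    (hdom : ∀ i, θbar * ∑ j, (G i j + G j i) < t + b)
    (x : (Fin N → ℝ) → Fin N → ℝ)
    (hx : ∀ θ, x θ = (s + a - p) •
      (((t + b) • (1 : Matrix (Fin N) (Fin N) ℝ) -
        (Matrix.diagonal (fun k => φ (θ k)) * G + Gᵀ * Matrix.diagonal (fun k => φ (θ k))))⁻¹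
        *ᵥ fun _ => 1)) :
    (∀ θ j, 0 ≤ x θ j) ∧
    (∀ (θ : Fin N → ℝ) (i j : Fin N) (s₁ s₂ : ℝ), s₁ ≤ s₂ →
      x (Function.update θ i s₁) j ≤ x (Function.update θ i s₂) j) := by
  rcases Nat.eq_zero_or_pos N with hN | hN
  · subst hN
    exact ⟨fun θ j => j.elim0, fun θ i => i.elim0⟩
  obtain ⟨i0⟩ : Nonempty (Fin N) := ⟨⟨0, hN⟩⟩
  have htb : 0 < t + b := by
    refine lt_of_le_of_lt ?_ (hdom i0)
    exact mul_nonneg hθ.le (Finset.sum_nonneg fun j _ => add_nonneg (hG i0 j) (hG j i0))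
  -- the C matrix for a given θ
  set Cm : (Fin N → ℝ) → Matrix (Fin N) (Fin N) ℝ := fun θ =>
    Matrix.diagonal (fun k => φ (θ k)) * G + Gᵀ * Matrix.diagonal (fun k => φ (θ k)) with hCm
  have hCapp : ∀ θ i j, Cm θ i j = φ (θ i) * G i j + G j i * φ (θ j) := by
    intro θ i j
    simp [hCm, Matrix.add_apply, Matrix.diagonal_mul, Matrix.mul_diagonal, Matrix.transpose_apply]
  set A : (Fin N → ℝ) → Matrix (Fin N) (Fin N) ℝ := fun θ =>
    (t + b) • (1 : Matrix (Fin N) (Fin N) ℝ) - Cm θ with hA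
  have hgood : ∀ θ, IsUnit (A θ) ∧ ∀ i j, 0 ≤ (A θ)⁻¹ i j := by
    intro θ
    refine key_invnn (t + b) htb (Cm θ) (fun i j => ?_) (fun i => ?_)
    · rw [hCapp]
      exact add_nonneg (mul_nonneg (hφrange (θ i)).1 (hG i j))
        (mul_nonneg (hG j i) (hφrange (θ j)).1)
    · refine lt_of_le_of_lt ?_ (hdom i)
      rw [Finset.mul_sum]
      refine Finset.sum_le_sum fun j _ => ?_
      rw [hCapp, mul_add]
      exact add_le_add (mul_le_mul_of_nonneg_right (hφrange (θ i)).2 (hG i j))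
        (by rw [mul_comm θbar (G j i)];
            exact mul_le_mul_of_nonneg_left (hφrange (θ j)).2 (hG j i))
  have hy : ∀ θ j, 0 ≤ ((A θ)⁻¹ *ᵥ fun _ => (1:ℝ)) j := by
    intro θ j
    rw [Matrix.mulVec]
    exact Finset.sum_nonneg fun k _ => mul_nonneg ((hgood θ).2 j k) one_pos.le
  have hxapp : ∀ θ j, x θ j = (s + a - p) * ((A θ)⁻¹ *ᵥ fun _ => (1:ℝ)) j := by
    intro θ j
    rw [hx θ]
    rfl
  constructor
  · intro θ j
    rw [hxapp]
    exact mul_nonneg (by linarith) (hy θ j)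
  · intro θ i j s₁ s₂ hs
    set θ1 := Function.update θ i s₁
    set θ2 := Function.update θ i s₂
    have hd : ∀ k, φ (θ1 k) ≤ φ (θ2 k) := by
      intro k
      by_cases hk : k = i
      · subst hk; simp [θ1, θ2, Function.update_self]; exact hφmono hs
      · simp [θ1, θ2, Function.update_of_ne hk]
    have hdet1 : IsUnit (A θ1).det := (Matrix.isUnit_iff_isUnit_det _).1 (hgood θ1).1
    have hdet2 : IsUnit (A θ2).det := (Matrix.isUnit_iff_isUnit_det _).1 (hgood θ2).1
    have hdiff : (A θ2)⁻¹ = (A θ1)⁻¹ + (A θ2)⁻¹ * (A θ1 - A θ2) * (A θ1)⁻¹ := by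
      rw [Matrix.mul_sub, Matrix.sub_mul, Matrix.mul_assoc,
        Matrix.mul_nonsing_inv _ hdet1, Matrix.nonsing_inv_mul _ hdet2,
        Matrix.mul_one, Matrix.one_mul]
      abel
    have hDnn : ∀ k l, 0 ≤ (A θ1 - A θ2) k l := by
      intro k l
      have : (A θ1 - A θ2) k l = Cm θ2 k l - Cm θ1 k l := by
        simp [hA, Matrix.sub_apply]
      rw [this, hCapp, hCapp]
      have h1 : φ (θ1 k) * G k l ≤ φ (θ2 k) * G k l :=
        mul_le_mul_of_nonneg_right (hd k) (hG k l)
      have h2 : G l k * φ (θ1 l) ≤ G l k * φ (θ2 l) :=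
        mul_le_mul_of_nonneg_left (hd l) (hG l k)
      linarith
    have hmv : ∀ (M : Matrix (Fin N) (Fin N) ℝ) (v : Fin N → ℝ),
        (∀ k l, 0 ≤ M k l) → (∀ k, 0 ≤ v k) → ∀ k, 0 ≤ (M *ᵥ v) k := by
      intro M v hM hv k
      rw [Matrix.mulVec]
      exact Finset.sum_nonneg fun l _ => mul_nonneg (hM k l) (hv l)
    have hkey : ((A θ1)⁻¹ *ᵥ fun _ => (1:ℝ)) j ≤ ((A θ2)⁻¹ *ᵥ fun _ => (1:ℝ)) j := by
      have : ((A θ2)⁻¹ *ᵥ fun _ => (1:ℝ)) = ((A θ1)⁻¹ *ᵥ fun _ => (1:ℝ))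
          + (A θ2)⁻¹ *ᵥ ((A θ1 - A θ2) *ᵥ ((A θ1)⁻¹ *ᵥ fun _ => (1:ℝ))) := by
        conv_lhs => rw [hdiff]
        rw [Matrix.add_mulVec]
        congr 1
        rw [Matrix.mulVec_mulVec, Matrix.mulVec_mulVec, Matrix.mul_assoc]
      rw [this, Pi.add_apply]
      have h0 : 0 ≤ ((A θ2)⁻¹ *ᵥ ((A θ1 - A θ2) *ᵥ ((A θ1)⁻¹ *ᵥ fun _ => (1:ℝ)))) j :=
        hmv _ _ (hgood θ2).2 (hmv _ _ hDnn (hy θ1)) j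
      linarith
    rw [hxapp, hxapp]
    exact mul_le_mul_of_nonneg_left hkey (by linarith)
end
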